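/- Let ν ∈ (0,1), η > 0 and C, C' > 0, and suppose S : (0,∞) → ℝ is measurable with |S(t)| ≤ C·t^(ν-1) for 0 < t ≤ 1 and |S(t)| ≤ C·t^(-ν-1) for t ≥ 1, and g : [0,∞) → ℝ is continuous with |g(t)| ≤ C' for all t ≥ 0 and |g(t)| ≤ C'·t^(-η) for t ≥ 1. Then with μ = min{ν, η}, there is a constant K such that ∫₀^t |S(t-s)|·|g(s)| ds ≤ K·t^(-μ) for all t ≥ 2. -/

import Mathlib

open MeasureTheory Set

theorem stmt_19 (ν η C C' : ℝ) (hν : ν ∈ Set.Ioo (0 : ℝ) 1) (hη : 0 < η)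
    (hC : 0 < C) (hC' : 0 < C')
    (S : ℝ → ℝ) (hS : Measurable S)
    (hS₁ : ∀ t : ℝ, 0 < t → t ≤ 1 → |S t| ≤ C * t ^ (ν - 1))
    (hS₂ : ∀ t : ℝ, 1 ≤ t → |S t| ≤ C * t ^ (-ν - 1))
    (g : ℝ → ℝ) (hg : Continuous g)
    (hg₁ : ∀ t : ℝ, 0 ≤ t → |g t| ≤ C')
    (hg₂ : ∀ t : ℝ, 1 ≤ t → |g t| ≤ C' * t ^ (-η)) :
    ∃ K : ℝ, ∀ t : ℝ, 2 ≤ t →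
      ∫ s in (0 : ℝ)..t, |S (t - s)| * |g s| ≤ K * t ^ (-(min ν η)) := by
  obtain ⟨hν0, hν1⟩ := hν
  have hνne : ν ≠ 0 := ne_of_gt hν0
  refine ⟨C * C' / ν * (2 ^ ν + 2 * 2 ^ η), fun t ht => ?_⟩
  have ht0 : (0:ℝ) < t := by linarith
  have ht2 : (1:ℝ) ≤ t / 2 := by linarith
  have htm : t / 2 ≤ t - 1 := by linarith
  have ht1 : (1:ℝ) ≤ t - 1 := by linarith
  set F : ℝ → ℝ := fun s => |S (t - s)| * |g s| with hFdef
  have hFmeas : Measurable F :=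
    ((hS.comp (measurable_const.sub measurable_id)).abs).mul hg.measurable.abs
  have hFnn : ∀ s, 0 ≤ F s := fun s => mul_nonneg (abs_nonneg _) (abs_nonneg _)
  have hSb : ∀ s : ℝ, s ≤ t - 1 → |S (t - s)| ≤ C * (t - s) ^ (-ν - 1) :=
    fun s hs => hS₂ _ (by linarith)
  have hSb1 : ∀ s : ℝ, s ≤ t - 1 → |S (t - s)| ≤ C := by
    intro s hs
    calc |S (t - s)| ≤ C * (t - s) ^ (-ν - 1) := hSb s hs
      _ ≤ C * 1 := by
          gcongr
          exact Real.rpow_le_one_of_one_le_of_nonpos (by linarith) (by linarith)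
      _ = C := mul_one C
  have hFb : ∀ s : ℝ, 0 ≤ s → s ≤ t - 1 → F s ≤ C * C' :=
    fun s h0 h1 => mul_le_mul (hSb1 s h1) (hg₁ s h0) (abs_nonneg _) hC.le
  -- integrability of F on pieces of [0, t-1]
  have hint_aux : ∀ a b : ℝ, 0 ≤ a → b ≤ t - 1 → a ≤ b → IntervalIntegrable F volume a b := by
    intro a b ha hb hab
    refine (intervalIntegrable_const (c := C * C')).mono_fun
      (hFmeas.aestronglyMeasurable.restrict) ?_
    filter_upwards [ae_restrict_mem measurableSet_uIoc] with s hs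
    rw [Set.uIoc_of_le hab] at hs
    rw [Real.norm_eq_abs, abs_of_nonneg (hFnn s), Real.norm_eq_abs]
    exact (hFb s (by linarith [hs.1]) (by linarith [hs.2])).trans (le_abs_self _)
  have hint1 : IntervalIntegrable F volume 0 (t/2) := hint_aux 0 (t/2) le_rfl htm (by linarith)
  have hint2 : IntervalIntegrable F volume (t/2) (t-1) :=
    hint_aux (t/2) (t-1) (by linarith) le_rfl htm
  -- dominating function on [t-1, t]
  have hdom3 : IntervalIntegrable (fun s => C * C' * (t-1) ^ (-η) * (t - s) ^ (ν - 1))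
      volume (t-1) t := by
    refine IntervalIntegrable.const_mul ?_ _
    have h := (intervalIntegral.intervalIntegrable_rpow' (a := 0) (b := 1)
      (show (-1:ℝ) < ν - 1 by linarith)).comp_sub_left t
    simpa using h.symm
  have hne : ∀ᵐ s : ℝ, s ≠ t := by
    rw [MeasureTheory.ae_iff]
    simp only [ne_eq, not_not, Set.setOf_eq_eq_singleton]; exact Real.volume_singleton (a := t)
  have hFb3 : ∀ s : ℝ, t - 1 ≤ s → s < t → F s ≤ C * C' * (t-1) ^ (-η) * (t - s) ^ (ν - 1) := by
    intro s hs1 hs2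
    have h1 : |S (t - s)| ≤ C * (t - s) ^ (ν - 1) := hS₁ _ (by linarith) (by linarith)
    have h2 : |g s| ≤ C' * (t-1) ^ (-η) := by
      calc |g s| ≤ C' * s ^ (-η) := hg₂ s (by linarith)
        _ ≤ C' * (t-1) ^ (-η) := mul_le_mul_of_nonneg_left
            (Real.rpow_le_rpow_of_nonpos (show (0:ℝ) < t-1 by linarith) hs1
              (neg_nonpos.mpr hη.le)) hC'.le
    calc F s ≤ (C * (t - s) ^ (ν - 1)) * (C' * (t-1) ^ (-η)) :=
          mul_le_mul h1 h2 (abs_nonneg _) (mul_nonneg hC.le (Real.rpow_nonneg (by linarith) _))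
      _ = C * C' * (t-1) ^ (-η) * (t - s) ^ (ν - 1) := by ring
  have hint3 : IntervalIntegrable F volume (t-1) t := by
    refine hdom3.mono_fun' (hFmeas.aestronglyMeasurable.restrict) ?_
    filter_upwards [ae_restrict_mem measurableSet_uIoc, ae_restrict_of_ae hne] with s hs hst
    rw [Set.uIoc_of_le (by linarith : t - 1 ≤ t)] at hs
    rw [Real.norm_eq_abs, abs_of_nonneg (hFnn s)]
    exact hFb3 s hs.1.le (lt_of_le_of_ne hs.2 hst)
  -- piece 1
  have hdom1 : IntervalIntegrable (fun s => C * C' * (t - s) ^ (-ν - 1)) volume 0 (t/2) := by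
    apply ContinuousOn.intervalIntegrable
    apply continuousOn_const.mul
    apply ContinuousOn.rpow_const ((continuous_const.sub continuous_id).continuousOn)
    intro s hs
    rw [Set.uIcc_of_le (by linarith : (0:ℝ) ≤ t/2)] at hs
    exact Or.inl (by show t - s ≠ 0; intro h; have := hs.2; linarith)
  have hb1 : ∫ s in (0:ℝ)..(t/2), F s ≤ C * C' / ν * (t/2) ^ (-ν) := by
    have hmono : ∫ s in (0:ℝ)..(t/2), F s ≤ ∫ s in (0:ℝ)..(t/2), C * C' * (t - s) ^ (-ν - 1) := by
      refine intervalIntegral.integral_mono_on (by linarith) hint1 hdom1 ?_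
      intro s hs
      calc F s ≤ (C * (t - s) ^ (-ν - 1)) * C' :=
            mul_le_mul (hSb s (by linarith [hs.2])) (hg₁ s hs.1) (abs_nonneg _) (mul_nonneg hC.le (Real.rpow_nonneg (by linarith [hs.2]) _))
        _ = C * C' * (t - s) ^ (-ν - 1) := by ring
    have e1 : t - t/2 = t/2 := by ring
    have e2 : t - 0 = t := by ring
    have e3 : -ν - 1 + 1 = -ν := by ring
    have hcalc : ∫ s in (0:ℝ)..(t/2), C * C' * (t - s) ^ (-ν - 1)
        = C * C' * ((t ^ (-ν) - (t/2) ^ (-ν)) / (-ν)) := by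
      rw [intervalIntegral.integral_const_mul,
        intervalIntegral.integral_comp_sub_left (fun u => u ^ (-ν - 1)) t, e1, e2,
        integral_rpow
          (Or.inr ⟨by intro h; apply hνne; linarith,
            by intro h; rcases Set.mem_uIcc.mp h with ⟨h1, h2⟩ | ⟨h1, h2⟩ <;> linarith⟩), e3]
    calc ∫ s in (0:ℝ)..(t/2), F s
        ≤ C * C' * ((t ^ (-ν) - (t/2) ^ (-ν)) / (-ν)) := hcalc ▸ hmono
      _ = C * C' / ν * ((t/2) ^ (-ν) - t ^ (-ν)) := by
          rw [div_neg, ← neg_div, neg_sub, mul_div_assoc', ← div_mul_eq_mul_div]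
      _ ≤ C * C' / ν * (t/2) ^ (-ν) := by
          have h1 : 0 ≤ C * C' / ν := by positivity
          nlinarith [Real.rpow_nonneg ht0.le (-ν)]
  -- piece 2
  have hdom2 : IntervalIntegrable (fun s => C * C' * (t/2) ^ (-η) * (t - s) ^ (-ν - 1))
      volume (t/2) (t-1) := by
    apply ContinuousOn.intervalIntegrable
    apply continuousOn_const.mul
    apply ContinuousOn.rpow_const ((continuous_const.sub continuous_id).continuousOn)
    intro s hs
    rw [Set.uIcc_of_le htm] at hs
    exact Or.inl (by show t - s ≠ 0; intro h; have := hs.2; linarith)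
  have hb2 : ∫ s in (t/2)..(t-1), F s ≤ C * C' / ν * (t/2) ^ (-η) := by
    have hmono : ∫ s in (t/2)..(t-1), F s
        ≤ ∫ s in (t/2)..(t-1), C * C' * (t/2) ^ (-η) * (t - s) ^ (-ν - 1) := by
      refine intervalIntegral.integral_mono_on htm hint2 hdom2 ?_
      intro s hs
      have h2 : |g s| ≤ C' * (t/2) ^ (-η) := by
        calc |g s| ≤ C' * s ^ (-η) := hg₂ s (by linarith [hs.1])
          _ ≤ C' * (t/2) ^ (-η) := mul_le_mul_of_nonneg_left
              (Real.rpow_le_rpow_of_nonpos (show (0:ℝ) < t/2 by linarith) hs.1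
                (neg_nonpos.mpr hη.le)) hC'.le
      calc F s ≤ (C * (t - s) ^ (-ν - 1)) * (C' * (t/2) ^ (-η)) :=
            mul_le_mul (hSb s hs.2) h2 (abs_nonneg _) (mul_nonneg hC.le (Real.rpow_nonneg (by linarith [hs.2]) _))
        _ = C * C' * (t/2) ^ (-η) * (t - s) ^ (-ν - 1) := by ring
    have e1 : t - (t-1) = 1 := by ring
    have e2 : t - t/2 = t/2 := by ring
    have e3 : -ν - 1 + 1 = -ν := by ring
    have hcalc : ∫ s in (t/2)..(t-1), C * C' * (t/2) ^ (-η) * (t - s) ^ (-ν - 1)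
        = C * C' * (t/2) ^ (-η) * (((t/2) ^ (-ν) - 1 ^ (-ν)) / (-ν)) := by
      rw [intervalIntegral.integral_const_mul,
        intervalIntegral.integral_comp_sub_left (fun u => u ^ (-ν - 1)) t, e1, e2,
        integral_rpow
          (Or.inr ⟨by intro h; apply hνne; linarith,
            by intro h; rcases Set.mem_uIcc.mp h with ⟨h1, h2⟩ | ⟨h1, h2⟩ <;> linarith⟩), e3]
    calc ∫ s in (t/2)..(t-1), F s
        ≤ C * C' * (t/2) ^ (-η) * (((t/2) ^ (-ν) - 1 ^ (-ν)) / (-ν)) := hcalc ▸ hmono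
      _ = C * C' / ν * (t/2) ^ (-η) * (1 - (t/2) ^ (-ν)) := by
          rw [Real.one_rpow, div_neg, ← neg_div, neg_sub, mul_div_assoc']
          ring
      _ ≤ C * C' / ν * (t/2) ^ (-η) * 1 := by
          have h1 : 0 ≤ C * C' / ν * (t/2) ^ (-η) := by positivity
          gcongr
          nlinarith [Real.rpow_nonneg (by linarith : (0:ℝ) ≤ t/2) (-ν)]
      _ = C * C' / ν * (t/2) ^ (-η) := mul_one _
  -- piece 3
  have hb3 : ∫ s in (t-1)..t, F s ≤ C * C' / ν * (t-1) ^ (-η) := by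
    have hmono : ∫ s in (t-1)..t, F s
        ≤ ∫ s in (t-1)..t, C * C' * (t-1) ^ (-η) * (t - s) ^ (ν - 1) := by
      refine intervalIntegral.integral_mono_ae_restrict (by linarith) hint3 hdom3 ?_
      filter_upwards [ae_restrict_mem measurableSet_Icc, ae_restrict_of_ae hne] with s hs hst
      exact hFb3 s hs.1 (lt_of_le_of_ne hs.2 hst)
    have e1 : t - t = 0 := by ring
    have e2 : t - (t-1) = 1 := by ring
    have e3 : ν - 1 + 1 = ν := by ring
    have hcalc : ∫ s in (t-1)..t, C * C' * (t-1) ^ (-η) * (t - s) ^ (ν - 1)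
        = C * C' * (t-1) ^ (-η) * ((1 ^ ν - 0 ^ ν) / ν) := by
      rw [intervalIntegral.integral_const_mul,
        intervalIntegral.integral_comp_sub_left (fun u => u ^ (ν - 1)) t, e1, e2,
        integral_rpow (Or.inl (by linarith)), e3]
    calc ∫ s in (t-1)..t, F s
        ≤ C * C' * (t-1) ^ (-η) * ((1 ^ ν - 0 ^ ν) / ν) := hcalc ▸ hmono
      _ = C * C' / ν * (t-1) ^ (-η) := by
          rw [Real.one_rpow, Real.zero_rpow hνne]
          field_simp
          norm_num
  -- assemble
  rw [show (∫ s in (0:ℝ)..t, F s)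
      = (∫ s in (0:ℝ)..(t/2), F s) + (∫ s in (t/2)..(t-1), F s) + (∫ s in (t-1)..t, F s) by
    rw [intervalIntegral.integral_add_adjacent_intervals hint1 hint2,
      intervalIntegral.integral_add_adjacent_intervals (hint1.trans hint2) hint3]]
  set A := t ^ (-(min ν η)) with hA
  have hA0 : 0 ≤ A := Real.rpow_nonneg ht0.le _
  have htν : t ^ (-ν) ≤ A := Real.rpow_le_rpow_of_exponent_le (by linarith)
    (neg_le_neg (min_le_left _ _))
  have htη : t ^ (-η) ≤ A := Real.rpow_le_rpow_of_exponent_le (by linarith)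
    (neg_le_neg (min_le_right _ _))
  have half_rpow : ∀ x : ℝ, (t/2) ^ (-x) = 2 ^ x * t ^ (-x) := by
    intro x
    rw [Real.div_rpow ht0.le (by norm_num), Real.rpow_neg (by norm_num : (0:ℝ) ≤ 2)]
    field_simp
  have k1 : (t/2) ^ (-ν) ≤ 2 ^ ν * A := by
    rw [half_rpow]
    exact mul_le_mul_of_nonneg_left htν (Real.rpow_nonneg (by norm_num) _)
  have k2 : (t/2) ^ (-η) ≤ 2 ^ η * A := by
    rw [half_rpow]
    exact mul_le_mul_of_nonneg_left htη (Real.rpow_nonneg (by norm_num) _)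
  have k3 : (t-1) ^ (-η) ≤ 2 ^ η * A :=
    le_trans (Real.rpow_le_rpow_of_nonpos (by linarith) htm (by linarith)) k2
  have hcc : 0 ≤ C * C' / ν := by positivity
  have m1 := mul_le_mul_of_nonneg_left k1 hcc
  have m2 := mul_le_mul_of_nonneg_left k2 hcc
  have m3 := mul_le_mul_of_nonneg_left k3 hcc
  have expand : C * C' / ν * (2 ^ ν + 2 * 2 ^ η) * A
      = C * C' / ν * (2 ^ ν * A) + C * C' / ν * (2 ^ η * A) + C * C' / ν * (2 ^ η * A) := by
    ring
  linarith [hb1, hb2, hb3, m1, m2, m3]
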